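/- As x → 0⁺, −log F(x) = 1/(2x²) + O(log(1/x)); that is, the function x ↦ −log F(x) − 1/(2x²) is O(log(1/x)) as x → 0⁺. -/

import Mathlib

open Real Set Filter
open MeasureTheory

/-- Standard normal density. -/
noncomputable def stdNormalPDF (x : ℝ) : ℝ :=
  Real.exp (-x ^ 2 / 2) / Real.sqrt (2 * Real.pi)

/-- `F x = ∫_0^x φ(1/v + v/2) dv`. -/
noncomputable def F (x : ℝ) : ℝ :=
  ∫ v in (0 : ℝ)..x, stdNormalPDF (1 / v + v / 2)

lemma sqrt2pi_pos : 0 < Real.sqrt (2 * Real.pi) := Real.sqrt_pos.2 (by positivity)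

lemma pdf_nonneg (t : ℝ) : 0 ≤ stdNormalPDF t := by
  unfold stdNormalPDF; positivity

lemma pdf_le (t : ℝ) : stdNormalPDF t ≤ 1 / Real.sqrt (2 * Real.pi) := by
  unfold stdNormalPDF
  have h1 : Real.exp (-t ^ 2 / 2) ≤ 1 := by
    rw [show (1:ℝ) = Real.exp 0 from Real.exp_zero.symm]
    apply Real.exp_le_exp.2; nlinarith [sq_nonneg t]
  exact (div_le_div_iff_of_pos_right sqrt2pi_pos).2 h1

lemma g_meas : Measurable (fun v : ℝ => stdNormalPDF (1 / v + v / 2)) := by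
  unfold stdNormalPDF
  fun_prop

lemma g_intOn (a b : ℝ) :
    IntegrableOn (fun v : ℝ => stdNormalPDF (1 / v + v / 2)) (Ioc a b) := by
  apply Integrable.mono' (integrableOn_const (C := 1 / Real.sqrt (2 * Real.pi)) measure_Ioc_lt_top.ne)
    g_meas.aestronglyMeasurable
  · filter_upwards with v
    rw [Real.norm_of_nonneg (pdf_nonneg _)]
    exact pdf_le _

lemma F_eq {x : ℝ} (hx : 0 ≤ x) :
    F x = ∫ v in Ioc (0:ℝ) x, stdNormalPDF (1 / v + v / 2) := by
  rw [F, intervalIntegral.integral_of_le hx]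

lemma F_upper {x : ℝ} (hx : 0 < x) :
    F x ≤ x * (Real.exp (-(1 / (2 * x ^ 2))) / Real.sqrt (2 * Real.pi)) := by
  rw [F_eq hx.le]
  calc (∫ v in Ioc (0:ℝ) x, stdNormalPDF (1 / v + v / 2))
      ≤ ∫ _ in Ioc (0:ℝ) x,
          Real.exp (-(1 / (2 * x ^ 2))) / Real.sqrt (2 * Real.pi) := by
        apply setIntegral_mono_on (g_intOn 0 x)
          (integrableOn_const measure_Ioc_lt_top.ne) measurableSet_Ioc
        intro v hv
        obtain ⟨hv0, hvx⟩ := hv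
        unfold stdNormalPDF
        apply (div_le_div_iff_of_pos_right sqrt2pi_pos).2
        apply Real.exp_le_exp.2
        have h1 : 1 / x ≤ 1 / v := one_div_le_one_div_of_le hv0 hvx
        have h2 : (0:ℝ) < 1 / x := by positivity
        have h3 : 1 / x ≤ 1 / v + v / 2 := by nlinarith
        have h4 : (1 / x) ^ 2 ≤ (1 / v + v / 2) ^ 2 := by nlinarith
        have h5 : (1 / x) ^ 2 = 1 / x ^ 2 := by field_simp
        have h8 : 1 / (2 * x ^ 2) = (1 / x ^ 2) / 2 := by
          rw [one_div, one_div, mul_inv]; ring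
        nlinarith
    _ = x * (Real.exp (-(1 / (2 * x ^ 2))) / Real.sqrt (2 * Real.pi)) := by
        rw [setIntegral_const, measureReal_def, Real.volume_Ioc, ENNReal.toReal_ofReal (by linarith),
          smul_eq_mul, sub_zero]

lemma F_lower {x : ℝ} (hx : 0 < x) (hx2 : x ≤ 1/2) :
    x ^ 3 * (Real.exp (-(1 / (2 * x ^ 2)) - 3) / Real.sqrt (2 * Real.pi)) ≤ F x := by
  have hxx : 0 < x - x ^ 3 := by nlinarith [sq_nonneg x, mul_pos hx hx]
  rw [F_eq hx.le]
  have hsub : Ioc (x - x ^ 3) x ⊆ Ioc (0:ℝ) x := Ioc_subset_Ioc (by linarith) le_rfl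
  calc x ^ 3 * (Real.exp (-(1 / (2 * x ^ 2)) - 3) / Real.sqrt (2 * Real.pi))
      = ∫ _ in Ioc (x - x ^ 3) x,
          Real.exp (-(1 / (2 * x ^ 2)) - 3) / Real.sqrt (2 * Real.pi) := by
        rw [setIntegral_const, measureReal_def, Real.volume_Ioc, ENNReal.toReal_ofReal (by linarith [pow_pos hx 3]),
          smul_eq_mul]
        ring
    _ ≤ ∫ v in Ioc (x - x ^ 3) x, stdNormalPDF (1 / v + v / 2) := by
        apply setIntegral_mono_on
          (integrableOn_const measure_Ioc_lt_top.ne) (g_intOn _ x)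
          measurableSet_Ioc
        intro v hv
        obtain ⟨hv0, hvx⟩ := hv
        have hvpos : 0 < v := lt_trans hxx hv0
        unfold stdNormalPDF
        apply (div_le_div_iff_of_pos_right sqrt2pi_pos).2
        apply Real.exp_le_exp.2
        -- need : -(1/(2x²)) - 3 ≤ -(1/v + v/2)²/2
        have h1 : 1 / v ≤ 1 / (x - x ^ 3) := one_div_le_one_div_of_le hxx hv0.le
        have h1' : (0:ℝ) < 1 / v := by positivity
        have h2 : (1 / v) ^ 2 ≤ (1 / (x - x ^ 3)) ^ 2 := by nlinarith
        have h3 : (1 / v + v / 2) ^ 2 = (1 / v) ^ 2 + 1 + v ^ 2 / 4 := by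
          field_simp; ring
        have h4 : (1 / (x - x ^ 3)) ^ 2 = 1 / (x - x ^ 3) ^ 2 := by field_simp
        have h5 : 1 / (x - x ^ 3) ^ 2 ≤ 1 / x ^ 2 + 4 := by
          rw [div_add' _ _ _ (by positivity), div_le_div_iff₀ (by positivity) (by positivity)]
          have ht : x ^ 2 ≤ 1/4 := by nlinarith
          have hq : (0:ℝ) ≤ 2 - 7 * x ^ 2 + 4 * (x ^ 2) ^ 2 := by nlinarith [sq_nonneg (x^2)]
          nlinarith [mul_nonneg (sq_nonneg (x^2)) hq]
        have h6 : v ^ 2 ≤ 1 := by nlinarith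
        have h8 : 1 / (2 * x ^ 2) = (1 / x ^ 2) / 2 := by
          rw [one_div, one_div, mul_inv]; ring
        nlinarith
    _ ≤ ∫ v in Ioc (0:ℝ) x, stdNormalPDF (1 / v + v / 2) := by
        apply setIntegral_mono_set (g_intOn 0 x)
        · filter_upwards with v using pdf_nonneg _
        · exact HasSubset.Subset.eventuallyLE hsub

/-- `−log F(x) = 1/(2x²) + O(log(1/x))` as `x → 0⁺`. -/
theorem neg_log_F_asymptotics :
    (fun x : ℝ => -Real.log (F x) - 1 / (2 * x ^ 2))
      =O[nhdsWithin 0 (Set.Ioi 0)] (fun x : ℝ => Real.log (1 / x)) := by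
  rw [Asymptotics.isBigO_iff]
  set s := Real.log (Real.sqrt (2 * Real.pi)) with hs_def
  have hs : 0 ≤ s := Real.log_nonneg (by
    rw [show (1:ℝ) = Real.sqrt 1 from (Real.sqrt_one).symm]
    exact Real.sqrt_le_sqrt (by nlinarith [Real.pi_gt_three]))
  refine ⟨6 + s, ?_⟩
  have hδ : (0:ℝ) < min (1/2) (Real.exp (-1)) := lt_min (by norm_num) (Real.exp_pos _)
  filter_upwards [Ioo_mem_nhdsGT_of_mem (Set.mem_Ico.2 ⟨le_rfl, hδ⟩)] with x hx
  obtain ⟨h0, hlt⟩ := hx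
  have hhalf : x ≤ 1/2 := le_trans hlt.le (min_le_left _ _)
  have he : x ≤ Real.exp (-1) := le_trans hlt.le (min_le_right _ _)
  have hA : (0:ℝ) < x ^ 3 * (Real.exp (-(1 / (2 * x ^ 2)) - 3) / Real.sqrt (2 * Real.pi)) := by
    positivity
  have hFA := F_lower h0 hhalf
  have hFB := F_upper h0
  have hF0 : 0 < F x := lt_of_lt_of_le hA hFA
  have hlogA : Real.log (x ^ 3 * (Real.exp (-(1 / (2 * x ^ 2)) - 3) / Real.sqrt (2 * Real.pi)))
      = 3 * Real.log x + (-(1 / (2 * x ^ 2)) - 3) - s := by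
    rw [Real.log_mul (by positivity) (by positivity),
      Real.log_div (Real.exp_ne_zero _) (ne_of_gt sqrt2pi_pos), Real.log_exp, Real.log_pow]
    push_cast; ring
  have hlogB : Real.log (x * (Real.exp (-(1 / (2 * x ^ 2))) / Real.sqrt (2 * Real.pi)))
      = Real.log x + (-(1 / (2 * x ^ 2))) - s := by
    rw [Real.log_mul (ne_of_gt h0) (by positivity),
      Real.log_div (Real.exp_ne_zero _) (ne_of_gt sqrt2pi_pos), Real.log_exp]
    ring
  have hlow : Real.log (x ^ 3 * (Real.exp (-(1 / (2 * x ^ 2)) - 3) / Real.sqrt (2 * Real.pi)))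
      ≤ Real.log (F x) := Real.log_le_log hA hFA
  have hupp : Real.log (F x)
      ≤ Real.log (x * (Real.exp (-(1 / (2 * x ^ 2))) / Real.sqrt (2 * Real.pi))) :=
    Real.log_le_log hF0 hFB
  rw [hlogA] at hlow; rw [hlogB] at hupp
  have hL : Real.log (1 / x) = -Real.log x := by rw [one_div, Real.log_inv]
  have hL1 : 1 ≤ -Real.log x := by
    have := Real.log_le_log h0 he
    rw [Real.log_exp] at this
    linarith
  rw [hL, Real.norm_of_nonneg (by linarith), Real.norm_of_nonneg (by linarith)]
  nlinarith [mul_le_mul_of_nonneg_left hL1 (by linarith : (0:ℝ) ≤ 3 + s)]
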